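/- For every α ∈ (0, 1) there exists a constant C = C(α) > 0 such that for all t > 0 and all z ∈ ℂ: ∫_0^∞ ∫_v^∞ ((u² + v²)^{−α/2} / |u + iv − z|) e^{−8tuv} du dv ≤ C t^{−(1−α)/2}. -/

import Mathlib

open MeasureTheory Set Real
open scoped ENNReal

lemma lint_Ioo_rpow {γ T : ℝ} (hγ : γ < 1) (hT : 0 < T) :
    ∫⁻ s in Ioo (0:ℝ) T, ENNReal.ofReal (s ^ (-γ)) ≤ ENNReal.ofReal (T ^ (1 - γ) / (1 - γ)) := by
  have hint : IntegrableOn (fun s : ℝ => s ^ (-γ)) (Ioo 0 T) := by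
    have := (intervalIntegral.intervalIntegrable_rpow' (a := 0) (b := T) (r := -γ) (by linarith)).1
    exact this.mono_set Ioo_subset_Ioc_self
  rw [← ofReal_integral_eq_lintegral_ofReal hint]
  · apply ENNReal.ofReal_le_ofReal
    rw [← integral_Ioc_eq_integral_Ioo, ← intervalIntegral.integral_of_le hT.le]
    rw [integral_rpow (Or.inl (by linarith))]
    rw [Real.zero_rpow (by linarith : -γ + 1 ≠ 0)]
    apply le_of_eq
    rw [sub_zero]
    ring_nf
  · filter_upwards [ae_restrict_mem measurableSet_Ioo] with s hs
    exact Real.rpow_nonneg hs.1.le _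

lemma lint_Ioi_rpow {r s : ℝ} (hr : r < -1) (hs : 0 < s) :
    ∫⁻ u in Ioi s, ENNReal.ofReal (u ^ r) ≤ ENNReal.ofReal (s ^ (r + 1) / (-(r + 1))) := by
  rw [← ofReal_integral_eq_lintegral_ofReal (integrableOn_Ioi_rpow_of_lt hr hs)]
  · apply ENNReal.ofReal_le_ofReal
    rw [integral_Ioi_rpow_of_lt hr hs]
    rw [div_neg, neg_div]
  · filter_upwards [ae_restrict_mem measurableSet_Ioi] with u hu
    exact Real.rpow_nonneg (hs.trans hu).le _

lemma lint_exp_Ioi {a : ℝ} (ha : 0 < a) :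
    ∫⁻ v in Ioi (0:ℝ), ENNReal.ofReal (Real.exp (-(a * v))) ≤ ENNReal.ofReal a⁻¹ := by
  have hint : IntegrableOn (fun v : ℝ => Real.exp (-a * v)) (Ioi 0) := exp_neg_integrableOn_Ioi 0 ha
  have : ∫⁻ v in Ioi (0:ℝ), ENNReal.ofReal (Real.exp (-(a * v))) =
      ∫⁻ v in Ioi (0:ℝ), ENNReal.ofReal (Real.exp (-a * v)) := by
    congr 1; ext v; ring_nf
  rw [this, ← ofReal_integral_eq_lintegral_ofReal hint]
  · apply ENNReal.ofReal_le_ofReal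
    have := integral_comp_mul_left_Ioi (fun x => Real.exp (-x)) 0 ha
    simp only [mul_zero, smul_eq_mul] at this
    have h2 : ∀ x : ℝ, Real.exp (-a * x) = Real.exp (-(a * x)) := fun x => by ring_nf
    calc ∫ v in Ioi (0:ℝ), Real.exp (-a * v)
        = ∫ v in Ioi (0:ℝ), (fun x => Real.exp (-x)) (a * v) := by
          apply setIntegral_congr_fun measurableSet_Ioi; intro x _; simp [h2]
      _ = a⁻¹ * ∫ x in Ioi (0:ℝ), Real.exp (-x) := this
      _ ≤ a⁻¹ := by rw [integral_exp_neg_Ioi_zero]; simp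
  · filter_upwards with v using (Real.exp_pos _).le

lemma lint_abs_kernel {γ T x : ℝ} (hγ0 : 0 < γ) (hγ : γ < 1) (hT : 0 < T) :
    ∫⁻ s : ℝ, (Ioo (x - T) (x + T)).indicator (fun s => ENNReal.ofReal (|s - x| ^ (-γ))) s
      ≤ ENNReal.ofReal (2 * (T ^ (1 - γ) / (1 - γ))) := by
  have hmeas : Measurable fun s : ℝ => ENNReal.ofReal (|s| ^ (-γ)) := by measurability
  set g : ℝ → ℝ≥0∞ := (Ioo (-T) T).indicator (fun s => ENNReal.ofReal (|s| ^ (-γ))) with hg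
  have hgmeas : Measurable g := hmeas.indicator measurableSet_Ioo
  have h1 : ∀ s : ℝ, (Ioo (x - T) (x + T)).indicator
      (fun s => ENNReal.ofReal (|s - x| ^ (-γ))) s = g (s - x) := by
    intro s
    rw [hg]
    by_cases hs : s - x ∈ Ioo (-T) T
    · rw [indicator_of_mem hs, indicator_of_mem (by obtain ⟨h1, h2⟩ := hs; constructor <;> [linarith; linarith])]
    · rw [indicator_of_notMem hs, indicator_of_notMem (by simp only [mem_Ioo] at hs ⊢; rintro ⟨h1, h2⟩; exact hs ⟨by linarith, by linarith⟩)]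
  simp_rw [h1]
  rw [show (∫⁻ s, g (s - x)) = ∫⁻ s, g s from
    (measurePreserving_sub_right volume x).lintegral_comp hgmeas]
  rw [hg, lintegral_indicator measurableSet_Ioo]
  have hsplit : ∫⁻ s in Ioo (-T) T, ENNReal.ofReal (|s| ^ (-γ)) ≤
      (∫⁻ s in Ioo (-T) 0, ENNReal.ofReal (|s| ^ (-γ))) +
      ∫⁻ s in Ico 0 T, ENNReal.ofReal (|s| ^ (-γ)) := by
    refine le_trans (lintegral_mono_set ?_) (lintegral_union_le _ _ _)
    intro s hs
    rcases lt_or_ge s 0 with h | h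
    · exact Or.inl ⟨hs.1, h⟩
    · exact Or.inr ⟨h, hs.2⟩
  have hIco : ∫⁻ s in Ico (0:ℝ) T, ENNReal.ofReal (|s| ^ (-γ)) ≤
      ENNReal.ofReal (T ^ (1 - γ) / (1 - γ)) := by
    have : ∫⁻ s in Ico (0:ℝ) T, ENNReal.ofReal (|s| ^ (-γ)) ≤
        (∫⁻ s in ({0} : Set ℝ), ENNReal.ofReal (|s| ^ (-γ))) +
        ∫⁻ s in Ioo (0:ℝ) T, ENNReal.ofReal (|s| ^ (-γ)) := by
      refine le_trans (lintegral_mono_set ?_) (lintegral_union_le _ _ _)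
      intro s hs
      rcases eq_or_lt_of_le hs.1 with h | h
      · exact Or.inl (by simp [← h])
      · exact Or.inr ⟨h, hs.2⟩
    rw [Measure.restrict_singleton, volume_singleton, zero_smul, lintegral_zero_measure, zero_add] at this
    refine this.trans ?_
    refine le_trans (le_of_eq ?_) (lint_Ioo_rpow hγ hT)
    apply setLIntegral_congr_fun measurableSet_Ioo
    intro s hs
    simp only [abs_of_pos hs.1]
  have hneg : ∫⁻ s in Ioo (-T) (0:ℝ), ENNReal.ofReal (|s| ^ (-γ)) ≤
      ENNReal.ofReal (T ^ (1 - γ) / (1 - γ)) := by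
    have h2 : ∀ s : ℝ, (Ioo (-T) (0:ℝ)).indicator (fun s => ENNReal.ofReal (|s| ^ (-γ))) s =
        ((Ioo (0:ℝ) T).indicator (fun s => ENNReal.ofReal (|s| ^ (-γ)))) (-s) := by
      intro s
      by_cases hs : s ∈ Ioo (-T) (0:ℝ)
      · rw [indicator_of_mem hs, indicator_of_mem (by constructor <;> [linarith [hs.2]; linarith [hs.1]]), abs_neg]
      · rw [indicator_of_notMem hs, indicator_of_notMem (by simp only [mem_Ioo] at hs ⊢; rintro ⟨h1, h2⟩; exact hs (by constructor <;> linarith))]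
    rw [← lintegral_indicator measurableSet_Ioo]
    simp_rw [h2]
    rw [show (∫⁻ s, ((Ioo (0:ℝ) T).indicator fun s => ENNReal.ofReal (|s| ^ (-γ))) (-s)) =
        ∫⁻ s, ((Ioo (0:ℝ) T).indicator fun s => ENNReal.ofReal (|s| ^ (-γ))) s from
      (Measure.measurePreserving_neg (volume : Measure ℝ)).lintegral_comp (hmeas.indicator measurableSet_Ioo)]
    rw [lintegral_indicator measurableSet_Ioo]
    refine le_trans (le_of_eq ?_) (lint_Ioo_rpow hγ hT)
    apply setLIntegral_congr_fun measurableSet_Ioo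
    intro s hs
    simp only [abs_of_pos hs.1]
  calc ∫⁻ s in Ioo (-T) T, ENNReal.ofReal (|s| ^ (-γ)) ≤ _ := hsplit
    _ ≤ ENNReal.ofReal (T ^ (1 - γ) / (1 - γ)) + ENNReal.ofReal (T ^ (1 - γ) / (1 - γ)) :=
        add_le_add hneg hIco
    _ ≤ ENNReal.ofReal (2 * (T ^ (1 - γ) / (1 - γ))) := by
        rw [← ENNReal.ofReal_add (div_nonneg (Real.rpow_nonneg hT.le _) (by linarith)) (div_nonneg (Real.rpow_nonneg hT.le _) (by linarith))]; apply ENNReal.ofReal_le_ofReal; ring_nf; exact le_refl _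

lemma stepA {β c : ℝ} (hβ0 : 0 < β) (hβ2 : β < 2) (hc : 0 < c) :
    ∫⁻ a : ℝ × ℝ, ({a : ℝ × ℝ | 0 < a.1 ∧ a.1 < a.2}).indicator
        (fun a => ENNReal.ofReal (a.2 ^ (-β) * Real.exp (-(c * a.2 * a.1)))) a
      ≤ ENNReal.ofReal ((1/(2-β) + 1/β) * (c ^ (-(1/2):ℝ)) ^ (2 - β)) := by
  set s : ℝ := c ^ (-(1/2):ℝ) with hsdef
  have hs : 0 < s := Real.rpow_pos_of_pos hc _
  have hss : s * s = c⁻¹ := by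
    rw [hsdef, ← Real.rpow_add hc]
    norm_num [Real.rpow_neg_one]
  have hfm : Measurable fun a : ℝ × ℝ => ENNReal.ofReal (a.2 ^ (-β) * Real.exp (-(c * a.2 * a.1))) := by
    fun_prop
  set f : ℝ × ℝ → ℝ≥0∞ := fun a => ENNReal.ofReal (a.2 ^ (-β) * Real.exp (-(c * a.2 * a.1))) with hfdef
  set S₁ : Set (ℝ × ℝ) := {a : ℝ × ℝ | (0 < a.1 ∧ a.1 < a.2) ∧ a.2 ≤ s} with hS1def
  set S₂ : Set (ℝ × ℝ) := {a : ℝ × ℝ | (0 < a.1 ∧ a.1 < a.2) ∧ s < a.2} with hS2def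
  have hS1m : MeasurableSet S₁ :=
    (((measurableSet_lt measurable_const measurable_fst).inter
      (measurableSet_lt measurable_fst measurable_snd)).inter
      (measurableSet_le measurable_snd measurable_const))
  have hS2m : MeasurableSet S₂ :=
    (((measurableSet_lt measurable_const measurable_fst).inter
      (measurableSet_lt measurable_fst measurable_snd)).inter
      (measurableSet_lt measurable_const measurable_snd))
  have hset : {a : ℝ × ℝ | 0 < a.1 ∧ a.1 < a.2} = S₁ ∪ S₂ := by
    ext a
    simp only [hS1def, hS2def, mem_setOf_eq, mem_union]
    constructor
    · intro h
      rcases le_or_gt a.2 s with h2 | h2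
      · exact Or.inl ⟨h, h2⟩
      · exact Or.inr ⟨h, h2⟩
    · rintro (⟨h, _⟩ | ⟨h, _⟩) <;> exact h
  have hdis : Disjoint S₁ S₂ := by
    rw [Set.disjoint_left]
    rintro a ⟨_, h1⟩ ⟨_, h2⟩
    linarith
  rw [hset, Set.indicator_union_of_disjoint hdis]
  rw [lintegral_add_left (hfm.indicator hS1m)]
  -- Part 1
  have part1 : ∫⁻ a : ℝ × ℝ, S₁.indicator f a ≤ ENNReal.ofReal (s ^ (2-β) / (2-β)) := by
    have hmono : ∀ a : ℝ × ℝ, S₁.indicator f a ≤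
        S₁.indicator (fun a => ENNReal.ofReal (a.2 ^ (-β))) a := by
      intro a
      by_cases h : a ∈ S₁
      · rw [indicator_of_mem h, indicator_of_mem h]
        apply ENNReal.ofReal_le_ofReal
        have h2 : (0:ℝ) ≤ a.2 := (lt_trans h.1.1 h.1.2).le
        refine mul_le_of_le_one_right (Real.rpow_nonneg h2 _) (Real.exp_le_one_iff.mpr ?_)
        have hpos : 0 < c * a.2 * a.1 := mul_pos (mul_pos hc (lt_trans h.1.1 h.1.2)) h.1.1
        linarith
      · rw [indicator_of_notMem h, indicator_of_notMem h]
    refine le_trans (lintegral_mono hmono) ?_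
    have hgm : Measurable fun a : ℝ × ℝ => ENNReal.ofReal (a.2 ^ (-β)) := by fun_prop
    rw [Measure.volume_eq_prod, lintegral_prod_symm _ ((hgm.indicator hS1m).aemeasurable)]
    have inner_eq : ∀ u : ℝ, (∫⁻ v : ℝ, S₁.indicator (fun a => ENNReal.ofReal (a.2 ^ (-β))) (v, u))
        = (Ioc (0:ℝ) s).indicator (fun u => ENNReal.ofReal (u ^ (-β)) * ENNReal.ofReal u) u := by
      intro u
      by_cases hu : 0 < u ∧ u ≤ s
      · have : (fun v : ℝ => S₁.indicator (fun a => ENNReal.ofReal (a.2 ^ (-β))) (v, u))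
            = (Ioo (0:ℝ) u).indicator (fun _ => ENNReal.ofReal (u ^ (-β))) := by
          funext v
          by_cases hv : v ∈ Ioo (0:ℝ) u
          · rw [indicator_of_mem hv, Set.indicator_of_mem (s := S₁) ⟨⟨hv.1, hv.2⟩, hu.2⟩]
          · rw [indicator_of_notMem hv, indicator_of_notMem (fun hmem => hv ⟨hmem.1.1, hmem.1.2⟩)]
        rw [this, lintegral_indicator measurableSet_Ioo, setLIntegral_const,
          Real.volume_Ioo, sub_zero, Set.indicator_of_mem (s := Ioc (0:ℝ) s) ⟨hu.1, hu.2⟩]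
      · have : (fun v : ℝ => S₁.indicator (fun a => ENNReal.ofReal (a.2 ^ (-β))) (v, u))
            = fun _ => 0 := by
          funext v
          rw [indicator_of_notMem]
          intro hmem
          exact hu ⟨lt_trans hmem.1.1 hmem.1.2, hmem.2⟩
        rw [this, lintegral_zero, indicator_of_notMem (fun hmem => hu ⟨hmem.1, hmem.2⟩)]
    simp_rw [inner_eq]
    rw [lintegral_indicator measurableSet_Ioc]
    have hval : ∀ u ∈ Ioc (0:ℝ) s, ENNReal.ofReal (u ^ (-β)) * ENNReal.ofReal u
        = ENNReal.ofReal (u ^ (1-β)) := by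
      intro u hu
      rw [← ENNReal.ofReal_mul (Real.rpow_nonneg hu.1.le _)]
      congr 1
      nth_rewrite 2 [← Real.rpow_one u]
      rw [← Real.rpow_add hu.1]
      congr 1
      ring
    rw [setLIntegral_congr_fun measurableSet_Ioc hval]
    have hsub : ∫⁻ u in Ioc (0:ℝ) s, ENNReal.ofReal (u ^ (1-β))
        ≤ (∫⁻ u in Ioo (0:ℝ) s, ENNReal.ofReal (u ^ (1-β))) +
          ∫⁻ u in ({s} : Set ℝ), ENNReal.ofReal (u ^ (1-β)) := by
      refine le_trans (lintegral_mono_set ?_) (lintegral_union_le _ _ _)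
      intro w hw
      rcases lt_or_eq_of_le hw.2 with h | h
      · exact Or.inl ⟨hw.1, h⟩
      · exact Or.inr (by simp [h])
    rw [Measure.restrict_singleton, volume_singleton, zero_smul, lintegral_zero_measure, add_zero] at hsub
    refine le_trans hsub ?_
    have h1 := lint_Ioo_rpow (γ := β - 1) (by linarith) hs
    rw [show (-(β - 1) : ℝ) = 1 - β by ring] at h1
    refine le_trans h1 (le_of_eq ?_)
    rw [show (1 - (β-1) : ℝ) = 2 - β by ring]
  -- Part 2
  have part2 : ∫⁻ a : ℝ × ℝ, S₂.indicator f a ≤ ENNReal.ofReal (s ^ (2-β) / β) := by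
    rw [Measure.volume_eq_prod, lintegral_prod_symm _ ((hfm.indicator hS2m).aemeasurable)]
    have inner_le : ∀ u : ℝ, (∫⁻ v : ℝ, S₂.indicator f (v, u))
        ≤ (Ioi s).indicator (fun u => ENNReal.ofReal c⁻¹ * ENNReal.ofReal (u ^ (-(β+1)))) u := by
      intro u
      by_cases hu : s < u
      · have hu0 : 0 < u := lt_trans hs hu
        have hb : ∀ v : ℝ, S₂.indicator f (v, u) ≤
            (Ioi (0:ℝ)).indicator
              (fun v => ENNReal.ofReal (u ^ (-β)) * ENNReal.ofReal (Real.exp (-(c * u * v)))) v := by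
          intro v
          by_cases hv : (v, u) ∈ S₂
          · rw [indicator_of_mem hv, indicator_of_mem (show v ∈ Ioi (0:ℝ) from hv.1.1)]
            rw [← ENNReal.ofReal_mul (Real.rpow_nonneg hu0.le _)]
          · rw [indicator_of_notMem hv]; exact zero_le
        refine le_trans (lintegral_mono hb) ?_
        rw [lintegral_indicator measurableSet_Ioi,
          lintegral_const_mul' _ _ ENNReal.ofReal_ne_top]
        have hexp : ∫⁻ v in Ioi (0:ℝ), ENNReal.ofReal (Real.exp (-(c * u * v)))
            ≤ ENNReal.ofReal (c * u)⁻¹ := lint_exp_Ioi (mul_pos hc hu0)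
        refine le_trans (mul_le_mul_right hexp _) ?_
        rw [indicator_of_mem (show u ∈ Ioi s from hu)]
        rw [← ENNReal.ofReal_mul (Real.rpow_nonneg hu0.le _),
          ← ENNReal.ofReal_mul (inv_nonneg.mpr hc.le)]
        apply ENNReal.ofReal_le_ofReal
        apply le_of_eq
        rw [mul_inv, Real.rpow_neg hu0.le (β+1), Real.rpow_add hu0, Real.rpow_one]
        rw [Real.rpow_neg hu0.le β]
        field_simp
      · have : (fun v : ℝ => S₂.indicator f (v, u)) = fun _ => 0 := by
          funext v
          exact indicator_of_notMem (fun hmem => hu hmem.2) _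
        rw [this, lintegral_zero, indicator_of_notMem (by simpa using hu)]
    refine le_trans (lintegral_mono inner_le) ?_
    rw [lintegral_indicator measurableSet_Ioi,
      lintegral_const_mul' _ _ ENNReal.ofReal_ne_top]
    have h2 := lint_Ioi_rpow (r := -(β+1)) (by linarith) hs
    refine le_trans (mul_le_mul_right h2 _) ?_
    rw [← ENNReal.ofReal_mul (inv_nonneg.mpr hc.le)]
    apply ENNReal.ofReal_le_ofReal
    rw [show (-(β+1) + 1 : ℝ) = -β by ring]
    rw [show (-(-β) : ℝ) = β by ring]
    apply le_of_eq
    rw [← hss]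
    rw [show s * s * (s ^ (-β) / β) = (s * s * s ^ (-β)) / β by ring]
    congr 1
    nth_rewrite 1 [← Real.rpow_one s]
    nth_rewrite 2 [← Real.rpow_one s]
    rw [← Real.rpow_add hs, ← Real.rpow_add hs]
    congr 1
    ring
  refine le_trans (add_le_add part1 part2) ?_
  have hnn : (0:ℝ) ≤ s ^ (2-β) := Real.rpow_nonneg hs.le _
  rw [← ENNReal.ofReal_add (div_nonneg hnn (by linarith)) (div_nonneg hnn hβ0.le)]
  apply ENNReal.ofReal_le_ofReal
  apply le_of_eq
  field_simp

lemma stepB {q T : ℝ} (hq1 : 1 < q) (hq2 : q < 2) (hT : 0 < T) (z : ℂ) :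
    ∫⁻ a : ℝ × ℝ, (({a : ℝ × ℝ | ‖(a.2:ℂ) + (a.1:ℂ) * Complex.I - z‖ < T}).indicator
        (fun a => ENNReal.ofReal ((‖(a.2:ℂ) + (a.1:ℂ) * Complex.I - z‖)⁻¹)) a) ^ q
      ≤ ENNReal.ofReal ((2 * (T ^ (1 - q/2) / (1 - q/2))) * (2 * (T ^ (1 - q/2) / (1 - q/2)))) := by
  set γ : ℝ := q / 2 with hγdef
  have hγ0 : 0 < γ := by rw [hγdef]; linarith
  have hγ1 : γ < 1 := by rw [hγdef]; linarith
  set x : ℝ := z.re with hxdef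
  set y : ℝ := z.im with hydef
  set h₁ : ℝ → ℝ≥0∞ := (Ioo (y - T) (y + T)).indicator
    (fun v => ENNReal.ofReal (|v - y| ^ (-γ))) with h1def
  set h₂ : ℝ → ℝ≥0∞ := (Ioo (x - T) (x + T)).indicator
    (fun u => ENNReal.ofReal (|u - x| ^ (-γ))) with h2def
  have h1m : Measurable h₁ := by
    apply Measurable.indicator _ measurableSet_Ioo; fun_prop
  have h2m : Measurable h₂ := by
    apply Measurable.indicator _ measurableSet_Ioo; fun_prop
  have hN : volume {a : ℝ × ℝ | a.1 = y ∨ a.2 = x} = 0 := by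
    apply measure_mono_null (t := ({y} : Set ℝ) ×ˢ (univ : Set ℝ) ∪ (univ : Set ℝ) ×ˢ ({x} : Set ℝ))
    · rintro a (h | h)
      · exact Or.inl ⟨h, mem_univ _⟩
      · exact Or.inr ⟨mem_univ _, h⟩
    · apply measure_union_null
      · rw [Measure.volume_eq_prod, Measure.prod_prod, volume_singleton, zero_mul]
      · rw [Measure.volume_eq_prod, Measure.prod_prod, volume_singleton, mul_zero]
  set B : Set (ℝ × ℝ) := {a : ℝ × ℝ | ‖(a.2:ℂ) + (a.1:ℂ) * Complex.I - z‖ < T} with hBdef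
  set K : ℝ × ℝ → ℝ≥0∞ :=
    fun a => ENNReal.ofReal ((‖(a.2:ℂ) + (a.1:ℂ) * Complex.I - z‖)⁻¹) with hKdef
  have hptwise : ∀ a : ℝ × ℝ, ¬(a.1 = y ∨ a.2 = x) →
      (B.indicator K a) ^ q ≤ h₁ a.1 * h₂ a.2 := by
    intro a ha
    push_neg at ha
    by_cases hmem : a ∈ B
    · rw [Set.indicator_of_mem hmem]
      have hre : ((a.2:ℂ) + (a.1:ℂ) * Complex.I - z).re = a.2 - x := by simp [hxdef]
      have him : ((a.2:ℂ) + (a.1:ℂ) * Complex.I - z).im = a.1 - y := by simp [hydef]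
      have hA : (0:ℝ) ≤ ‖(a.2:ℂ) + (a.1:ℂ) * Complex.I - z‖ :=
        norm_nonneg _
      have hd1 : 0 < |a.1 - y| := abs_pos.mpr (sub_ne_zero.mpr ha.1)
      have hd2 : 0 < |a.2 - x| := abs_pos.mpr (sub_ne_zero.mpr ha.2)
      have hmemB : ‖(a.2:ℂ) + (a.1:ℂ) * Complex.I - z‖ < T := hmem
      have h2A : |a.2 - x| ≤ ‖(a.2:ℂ) + (a.1:ℂ) * Complex.I - z‖ := by
        rw [← hre]; exact Complex.abs_re_le_norm _
      have h1A : |a.1 - y| ≤ ‖(a.2:ℂ) + (a.1:ℂ) * Complex.I - z‖ := by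
        rw [← him]; exact Complex.abs_im_le_norm _
      have hmem1 : a.1 ∈ Ioo (y - T) (y + T) := by
        have h := abs_lt.mp (lt_of_le_of_lt h1A hmemB)
        exact ⟨by linarith [h.1], by linarith [h.2]⟩
      have hmem2 : a.2 ∈ Ioo (x - T) (x + T) := by
        have h := abs_lt.mp (lt_of_le_of_lt h2A hmemB)
        exact ⟨by linarith [h.1], by linarith [h.2]⟩
      rw [h1def, h2def, Set.indicator_of_mem hmem1, Set.indicator_of_mem hmem2]
      set P : ℝ := |a.1 - y| * |a.2 - x| with hPdef
      have hP : 0 < P := mul_pos hd1 hd2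
      have hsq : P ≤ (‖(a.2:ℂ) + (a.1:ℂ) * Complex.I - z‖)^2 := by
        rw [Complex.sq_norm, Complex.normSq_apply, hre, him, hPdef]
        nlinarith [sq_nonneg (|a.1 - y| - |a.2 - x|), abs_mul_abs_self (a.1 - y),
          abs_mul_abs_self (a.2 - x)]
      have hsqrt : Real.sqrt P ≤ ‖(a.2:ℂ) + (a.1:ℂ) * Complex.I - z‖ := by
        calc Real.sqrt P ≤ Real.sqrt ((‖(a.2:ℂ) + (a.1:ℂ) * Complex.I - z‖)^2) :=
              Real.sqrt_le_sqrt hsq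
          _ = _ := Real.sqrt_sq hA
      have hinv : (‖(a.2:ℂ) + (a.1:ℂ) * Complex.I - z‖)⁻¹ ≤ (Real.sqrt P)⁻¹ :=
        inv_anti₀ (Real.sqrt_pos.mpr hP) hsqrt
      show ENNReal.ofReal ((‖(a.2:ℂ) + (a.1:ℂ) * Complex.I - z‖)⁻¹) ^ q ≤
        ENNReal.ofReal (|a.1 - y| ^ (-γ)) * ENNReal.ofReal (|a.2 - x| ^ (-γ))
      rw [ENNReal.ofReal_rpow_of_nonneg (inv_nonneg.mpr hA) (by linarith : (0:ℝ) ≤ q),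
        ← ENNReal.ofReal_mul (Real.rpow_nonneg (abs_nonneg _) _)]
      apply ENNReal.ofReal_le_ofReal
      calc (‖(a.2:ℂ) + (a.1:ℂ) * Complex.I - z‖)⁻¹ ^ q
          ≤ (Real.sqrt P)⁻¹ ^ q := Real.rpow_le_rpow (inv_nonneg.mpr hA) hinv (by linarith)
        _ = |a.1 - y| ^ (-γ) * |a.2 - x| ^ (-γ) := by
            rw [Real.sqrt_eq_rpow, ← Real.rpow_neg hP.le, ← Real.rpow_mul hP.le,
              show (-(1/2) * q : ℝ) = -γ by rw [hγdef]; ring,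
              Real.mul_rpow (abs_nonneg _) (abs_nonneg _)]
    · rw [Set.indicator_of_notMem hmem, ENNReal.zero_rpow_of_pos (by linarith)]
      exact zero_le
  have hae : ∀ᵐ a : ℝ × ℝ, (B.indicator K a) ^ q ≤ h₁ a.1 * h₂ a.2 := by
    rw [ae_iff]
    refine measure_mono_null ?_ hN
    intro a ha
    by_contra h
    exact ha (hptwise a h)
  refine le_trans (lintegral_mono_ae hae) ?_
  rw [Measure.volume_eq_prod, lintegral_prod_mul h1m.aemeasurable h2m.aemeasurable]
  refine le_trans (mul_le_mul' (lint_abs_kernel hγ0 hγ1 hT) (lint_abs_kernel hγ0 hγ1 hT)) ?_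
  rw [← ENNReal.ofReal_mul (mul_nonneg (by norm_num) (div_nonneg (Real.rpow_nonneg hT.le _) (by linarith)))]

set_option maxHeartbeats 2000000 in
/-- For every `α ∈ (0,1)` there is a constant `C = C(α) > 0` such that
for all `t > 0` and all `z ∈ ℂ`,
`∫₀^∞ ∫_v^∞ ((u²+v²)^{-α/2} / |u+iv-z|) e^{-8tuv} du dv ≤ C t^{-(1-α)/2}`. -/
theorem statement16 (α : ℝ) (hα0 : 0 < α) (hα1 : α < 1) :
    ∃ C : ℝ, 0 < C ∧
      ∀ t : ℝ, 0 < t → ∀ z : ℂ,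
        ∫⁻ (v : ℝ) in Set.Ioi (0 : ℝ), ∫⁻ (u : ℝ) in Set.Ioi v,
            ENNReal.ofReal
              ((u ^ 2 + v ^ 2) ^ (-(α / 2)) /
                  ‖(u : ℂ) + (v : ℂ) * Complex.I - z‖ *
                Real.exp (-8 * t * u * v)) ≤
          ENNReal.ofReal (C * t ^ (-((1 - α) / 2))) := by
  set p : ℝ := 1 + 1/α with hpdef
  set q : ℝ := 1 + α with hqdef
  have hp1 : 1 < p := by
    rw [hpdef]
    have h : 1 < 1/α := by rw [lt_div_iff₀ hα0]; linarith
    linarith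
  have hq1 : 1 < q := by rw [hqdef]; linarith
  have hq2 : q < 2 := by rw [hqdef]; linarith
  have hpq : p.HolderConjugate q := by
    refine Real.holderConjugate_iff.mpr ⟨hp1, ?_⟩
    rw [hpdef, hqdef]
    have hα : α ≠ 0 := hα0.ne'
    have h1 : (1 + 1/α) ≠ 0 := by positivity
    have h2 : (1 + α) ≠ 0 := by positivity
    field_simp
    ring
  have hαp : α * p = α + 1 := by rw [hpdef]; field_simp
  set CA : ℝ := 1/(2-(α+1)) + 1/(α+1) with hCAdef
  have hCA : 0 < CA := add_pos (one_div_pos.mpr (by linarith)) (one_div_pos.mpr (by linarith))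
  set Cfar : ℝ := 1/(2-α) + 1/α with hCfardef
  have hCfar : 0 < Cfar := add_pos (one_div_pos.mpr (by linarith)) (one_div_pos.mpr hα0)
  have h1q2 : 0 < 1 - q/2 := by rw [hqdef]; linarith
  set M : ℝ := (2/(1-q/2)) * (2/(1-q/2)) with hMdef
  have hM : 0 < M := mul_pos (div_pos two_pos h1q2) (div_pos two_pos h1q2)
  set Cnear : ℝ := CA ^ (1/p) * M ^ (1/q) with hCneardef
  have hCnear : 0 < Cnear := mul_pos (Real.rpow_pos_of_pos hCA _) (Real.rpow_pos_of_pos hM _)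
  refine ⟨Cfar + Cnear, by positivity, ?_⟩
  intro t ht z
  set c : ℝ := 8 * t with hcdef
  have hc : 0 < c := by rw [hcdef]; linarith
  set T : ℝ := t ^ (-(1/2) : ℝ) with hTdef
  have hT : 0 < T := Real.rpow_pos_of_pos ht _
  set s8 : ℝ := c ^ (-(1/2) : ℝ) with hs8def
  have hs8 : 0 < s8 := Real.rpow_pos_of_pos hc _
  have hs8T : s8 ≤ T := by
    rw [hs8def, hTdef]
    exact Real.rpow_le_rpow_of_nonpos ht (by rw [hcdef]; linarith) (by norm_num)
  set S : Set (ℝ×ℝ) := {a : ℝ×ℝ | 0 < a.1 ∧ a.1 < a.2} with hSdef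
  have hSm : MeasurableSet S :=
    ((measurableSet_lt measurable_const measurable_fst).inter
      (measurableSet_lt measurable_fst measurable_snd))
  set f₁ : ℝ×ℝ → ℝ≥0∞ := S.indicator
    (fun a => ENNReal.ofReal (a.2 ^ (-α) * Real.exp (-(c * a.2 * a.1)))) with hf1def
  have hf1m : Measurable f₁ := by
    apply Measurable.indicator _ hSm
    fun_prop
  have habsC : Continuous fun a : ℝ×ℝ => ‖(a.2:ℂ) + (a.1:ℂ) * Complex.I - z‖ := by
    apply continuous_norm.comp
    continuity
  set B : Set (ℝ×ℝ) := {a : ℝ×ℝ | ‖(a.2:ℂ) + (a.1:ℂ) * Complex.I - z‖ < T} with hBdef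
  have hBm : MeasurableSet B := measurableSet_lt habsC.measurable measurable_const
  set K : ℝ×ℝ → ℝ≥0∞ :=
    fun a => ENNReal.ofReal ((‖(a.2:ℂ) + (a.1:ℂ) * Complex.I - z‖)⁻¹) with hKdef
  have hKm : Measurable K := habsC.measurable.inv.ennreal_ofReal
  have hFm : Measurable fun a : ℝ×ℝ => f₁ a * K a := hf1m.mul hKm
  -- Step 0
  have hstep0 : (∫⁻ (v : ℝ) in Set.Ioi (0 : ℝ), ∫⁻ (u : ℝ) in Set.Ioi v,
      ENNReal.ofReal ((u ^ 2 + v ^ 2) ^ (-(α / 2)) /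
        ‖(u : ℂ) + (v : ℂ) * Complex.I - z‖ * Real.exp (-8 * t * u * v)))
      ≤ ∫⁻ a : ℝ×ℝ, f₁ a * K a := by
    have hinner : ∀ v ∈ Ioi (0:ℝ), (∫⁻ (u : ℝ) in Set.Ioi v,
        ENNReal.ofReal ((u ^ 2 + v ^ 2) ^ (-(α / 2)) /
          ‖(u : ℂ) + (v : ℂ) * Complex.I - z‖ * Real.exp (-8 * t * u * v)))
        ≤ ∫⁻ u : ℝ, f₁ (v, u) * K (v, u) := by
      intro v hv
      rw [← lintegral_indicator measurableSet_Ioi]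
      apply lintegral_mono
      intro u
      by_cases hu : u ∈ Ioi v
      · rw [Set.indicator_of_mem hu]
        have hv0 : (0:ℝ) < v := hv
        have hu0 : (0:ℝ) < u := lt_trans hv0 hu
        have hmemS : ((v, u) : ℝ×ℝ) ∈ S := ⟨hv0, hu⟩
        show ENNReal.ofReal ((u ^ 2 + v ^ 2) ^ (-(α / 2)) /
            ‖(u : ℂ) + (v : ℂ) * Complex.I - z‖ * Real.exp (-8 * t * u * v))
          ≤ f₁ (v, u) * K (v, u)
        rw [hf1def, Set.indicator_of_mem hmemS]
        show ENNReal.ofReal ((u ^ 2 + v ^ 2) ^ (-(α / 2)) /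
            ‖(u : ℂ) + (v : ℂ) * Complex.I - z‖ * Real.exp (-8 * t * u * v))
          ≤ ENNReal.ofReal (u ^ (-α) * Real.exp (-(c * u * v))) *
            ENNReal.ofReal ((‖(u:ℂ) + (v:ℂ) * Complex.I - z‖)⁻¹)
        rw [← ENNReal.ofReal_mul (mul_nonneg (Real.rpow_nonneg hu0.le _) (Real.exp_nonneg _))]
        apply ENNReal.ofReal_le_ofReal
        have hexpeq : Real.exp (-8 * t * u * v) = Real.exp (-(c * u * v)) := by
          congr 1; rw [hcdef]; ring
        have hA : (0:ℝ) ≤ ‖(u:ℂ) + (v:ℂ) * Complex.I - z‖ := norm_nonneg _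
        have key : (u ^ 2 + v ^ 2) ^ (-(α / 2)) ≤ u ^ (-α) := by
          have h1 : (0:ℝ) < u^2 := by positivity
          have h2 : (u:ℝ)^2 ≤ u^2 + v^2 := by nlinarith [sq_nonneg v]
          have h3 := Real.rpow_le_rpow_of_nonpos h1 h2 (by linarith : -(α/2) ≤ 0)
          have h4 : ((u:ℝ)^2)^(-(α/2)) = u^(-α) := by
            rw [← Real.rpow_natCast u 2, ← Real.rpow_mul hu0.le]
            congr 1
            push_cast
            ring
          exact h4 ▸ h3
        calc (u ^ 2 + v ^ 2) ^ (-(α / 2)) /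
              ‖(u : ℂ) + (v : ℂ) * Complex.I - z‖ * Real.exp (-8 * t * u * v)
            = (u ^ 2 + v ^ 2) ^ (-(α / 2)) *
              ((‖(u : ℂ) + (v : ℂ) * Complex.I - z‖)⁻¹ * Real.exp (-(c * u * v))) := by
              rw [hexpeq]; ring
          _ ≤ u ^ (-α) *
              ((‖(u : ℂ) + (v : ℂ) * Complex.I - z‖)⁻¹ * Real.exp (-(c * u * v))) :=
              mul_le_mul_of_nonneg_right key
                (mul_nonneg (inv_nonneg.mpr hA) (Real.exp_nonneg _))
          _ = u ^ (-α) * Real.exp (-(c * u * v)) *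
              (‖(u : ℂ) + (v : ℂ) * Complex.I - z‖)⁻¹ := by ring
      · rw [Set.indicator_of_notMem hu]
        exact zero_le
    calc (∫⁻ (v : ℝ) in Set.Ioi (0 : ℝ), ∫⁻ (u : ℝ) in Set.Ioi v,
        ENNReal.ofReal ((u ^ 2 + v ^ 2) ^ (-(α / 2)) /
          ‖(u : ℂ) + (v : ℂ) * Complex.I - z‖ * Real.exp (-8 * t * u * v)))
        ≤ ∫⁻ v in Ioi (0:ℝ), ∫⁻ u : ℝ, f₁ (v, u) * K (v, u) :=
          lintegral_mono_ae ((ae_restrict_iff' measurableSet_Ioi).mpr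
            (Filter.Eventually.of_forall hinner))
      _ ≤ ∫⁻ v : ℝ, ∫⁻ u : ℝ, f₁ (v, u) * K (v, u) := setLIntegral_le_lintegral _ _
      _ = ∫⁻ a : ℝ×ℝ, f₁ a * K a := by
          rw [Measure.volume_eq_prod, lintegral_prod _ hFm.aemeasurable]
  -- Far part
  have hfar : ∫⁻ a in Bᶜ, f₁ a * K a ≤ ENNReal.ofReal (Cfar * T ^ (1-α)) := by
    have hpt : ∀ a ∈ Bᶜ, f₁ a * K a ≤ ENNReal.ofReal T⁻¹ * f₁ a := by
      intro a haB
      have hTA : T ≤ ‖(a.2:ℂ) + (a.1:ℂ) * Complex.I - z‖ := not_lt.mp haB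
      have hK : K a ≤ ENNReal.ofReal T⁻¹ :=
        ENNReal.ofReal_le_ofReal (inv_anti₀ hT hTA)
      calc f₁ a * K a ≤ f₁ a * ENNReal.ofReal T⁻¹ := mul_le_mul_right hK _
        _ = ENNReal.ofReal T⁻¹ * f₁ a := mul_comm _ _
    calc ∫⁻ a in Bᶜ, f₁ a * K a ≤ ∫⁻ a in Bᶜ, ENNReal.ofReal T⁻¹ * f₁ a :=
          lintegral_mono_ae ((ae_restrict_iff' hBm.compl).mpr (Filter.Eventually.of_forall hpt))
      _ = ENNReal.ofReal T⁻¹ * ∫⁻ a in Bᶜ, f₁ a := lintegral_const_mul' _ _ ENNReal.ofReal_ne_top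
      _ ≤ ENNReal.ofReal T⁻¹ * ∫⁻ a, f₁ a := mul_le_mul_right (setLIntegral_le_lintegral _ _) _
      _ ≤ ENNReal.ofReal T⁻¹ * ENNReal.ofReal ((1/(2-α) + 1/α) * s8 ^ (2 - α)) :=
          mul_le_mul_right (stepA hα0 (by linarith) hc) _
      _ ≤ ENNReal.ofReal T⁻¹ * ENNReal.ofReal (Cfar * T ^ (2 - α)) := by
          apply mul_le_mul_right
          apply ENNReal.ofReal_le_ofReal
          rw [hCfardef]
          exact mul_le_mul_of_nonneg_left
            (Real.rpow_le_rpow hs8.le hs8T (by linarith)) hCfar.le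
      _ = ENNReal.ofReal (Cfar * T ^ (1-α)) := by
          rw [← ENNReal.ofReal_mul (inv_nonneg.mpr hT.le)]
          congr 1
          have hTT : T⁻¹ * T ^ (2-α) = T ^ (1-α) := by
            rw [← Real.rpow_neg_one T, ← Real.rpow_add hT]
            congr 1; ring
          calc T⁻¹ * (Cfar * T ^ (2-α)) = Cfar * (T⁻¹ * T ^ (2-α)) := by ring
            _ = Cfar * T ^ (1-α) := by rw [hTT]
  -- Near part
  have hnear : ∫⁻ a in B, f₁ a * K a ≤ ENNReal.ofReal (Cnear * T ^ (1-α)) := by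
    have hsplitind : ∀ a : ℝ×ℝ, B.indicator (fun a => f₁ a * K a) a = f₁ a * B.indicator K a := by
      intro a
      by_cases h : a ∈ B
      · rw [Set.indicator_of_mem h, Set.indicator_of_mem h]
      · rw [Set.indicator_of_notMem h, Set.indicator_of_notMem h, mul_zero]
    rw [← lintegral_indicator hBm]
    simp_rw [hsplitind]
    have hHo := ENNReal.lintegral_mul_le_Lp_mul_Lq volume hpq hf1m.aemeasurable
      ((hKm.indicator hBm).aemeasurable)
    refine le_trans hHo ?_
    -- bound (∫ f₁^p)^(1/p)
    have hfp : ∫⁻ a, f₁ a ^ p ≤ ENNReal.ofReal (CA * T ^ (1-α)) := by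
      have hpt : ∀ a : ℝ×ℝ, f₁ a ^ p ≤ S.indicator
          (fun a => ENNReal.ofReal (a.2 ^ (-(α+1)) * Real.exp (-(c * a.2 * a.1)))) a := by
        intro a
        by_cases h : a ∈ S
        · rw [hf1def, Set.indicator_of_mem h, Set.indicator_of_mem h]
          have hu0 : 0 < a.2 := lt_trans h.1 h.2
          rw [ENNReal.ofReal_rpow_of_nonneg
            (mul_nonneg (Real.rpow_nonneg hu0.le _) (Real.exp_nonneg _)) (by linarith : (0:ℝ) ≤ p)]
          apply ENNReal.ofReal_le_ofReal
          rw [Real.mul_rpow (Real.rpow_nonneg hu0.le _) (Real.exp_nonneg _),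
            ← Real.rpow_mul hu0.le, show (-α) * p = -(α+1) by rw [neg_mul, hαp],
            ← Real.exp_mul]
          apply mul_le_mul_of_nonneg_left _ (Real.rpow_nonneg hu0.le _)
          apply Real.exp_le_exp.mpr
          have hcu : 0 ≤ c * a.2 * a.1 := mul_nonneg (mul_nonneg hc.le hu0.le) h.1.le
          nlinarith
        · rw [hf1def, Set.indicator_of_notMem h, Set.indicator_of_notMem h,
            ENNReal.zero_rpow_of_pos (by linarith)]
      refine le_trans (lintegral_mono hpt) ?_
      refine le_trans (stepA (β := α+1) (by linarith) (by linarith) hc) ?_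
      apply ENNReal.ofReal_le_ofReal
      have hstep : (1/(2-(α+1)) + 1/(α+1) : ℝ) * s8 ^ (2-(α+1)) = CA * s8 ^ (1-α) := by
        rw [hCAdef]
        congr 2
        ring
      rw [hstep]
      exact mul_le_mul_of_nonneg_left
        (Real.rpow_le_rpow hs8.le hs8T (by linarith)) hCA.le
    have hfp' : (∫⁻ a, f₁ a ^ p) ^ (1/p) ≤ ENNReal.ofReal (CA^(1/p) * T ^ ((1-α)*(1/p))) := by
      refine le_trans (ENNReal.rpow_le_rpow hfp (one_div_nonneg.mpr (by linarith : (0:ℝ) ≤ p))) ?_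
      rw [ENNReal.ofReal_rpow_of_nonneg (mul_nonneg hCA.le (Real.rpow_nonneg hT.le _)) (one_div_nonneg.mpr (by linarith : (0:ℝ) ≤ p))]
      apply ENNReal.ofReal_le_ofReal
      rw [Real.mul_rpow hCA.le (Real.rpow_nonneg hT.le _), ← Real.rpow_mul hT.le]
    -- bound (∫ (B.indicator K)^q)^(1/q)
    have hKq : (∫⁻ a, (B.indicator K) a ^ q) ^ (1/q)
        ≤ ENNReal.ofReal (M^(1/q) * T ^ ((2-q)*(1/q))) := by
      have h0 := stepB hq1 hq2 hT z
      have hNM : (2 * (T ^ (1 - q/2) / (1 - q/2))) * (2 * (T ^ (1 - q/2) / (1 - q/2)))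
          = M * T ^ (2-q) := by
        have hTq : T ^ (1-q/2) * T ^ (1-q/2) = T ^ (2-q) := by
          rw [← Real.rpow_add hT]; congr 1; ring
        calc (2 * (T ^ (1 - q/2) / (1 - q/2))) * (2 * (T ^ (1 - q/2) / (1 - q/2)))
            = (2/(1-q/2)) * (2/(1-q/2)) * (T ^ (1-q/2) * T ^ (1-q/2)) := by ring
          _ = M * T ^ (2-q) := by rw [hTq, hMdef]
      rw [hNM] at h0
      refine le_trans (ENNReal.rpow_le_rpow h0 (one_div_nonneg.mpr (by linarith : (0:ℝ) ≤ q))) ?_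
      rw [ENNReal.ofReal_rpow_of_nonneg (mul_nonneg hM.le (Real.rpow_nonneg hT.le _)) (one_div_nonneg.mpr (by linarith : (0:ℝ) ≤ q))]
      apply ENNReal.ofReal_le_ofReal
      rw [Real.mul_rpow hM.le (Real.rpow_nonneg hT.le _), ← Real.rpow_mul hT.le]
    refine le_trans (mul_le_mul' hfp' hKq) ?_
    rw [← ENNReal.ofReal_mul (mul_nonneg (Real.rpow_nonneg hCA.le _) (Real.rpow_nonneg hT.le _))]
    apply ENNReal.ofReal_le_ofReal
    apply le_of_eq
    have hexps : (1-α)*(1/p) + (2-q)*(1/q) = 1-α := by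
      rw [hpdef, hqdef]
      have hα : α ≠ 0 := hα0.ne'
      have h2 : (1 + α) ≠ 0 := by positivity
      have h3 : (1 + 1/α) ≠ 0 := by positivity
      field_simp
      ring
    calc CA^(1/p) * T ^ ((1-α)*(1/p)) * (M^(1/q) * T ^ ((2-q)*(1/q)))
        = CA^(1/p) * M^(1/q) * (T ^ ((1-α)*(1/p)) * T ^ ((2-q)*(1/q))) := by ring
      _ = Cnear * T ^ (1-α) := by
          rw [← Real.rpow_add hT, hexps, hCneardef]
  -- Combine
  calc (∫⁻ (v : ℝ) in Set.Ioi (0 : ℝ), ∫⁻ (u : ℝ) in Set.Ioi v,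
      ENNReal.ofReal ((u ^ 2 + v ^ 2) ^ (-(α / 2)) /
        ‖(u : ℂ) + (v : ℂ) * Complex.I - z‖ * Real.exp (-8 * t * u * v)))
      ≤ ∫⁻ a : ℝ×ℝ, f₁ a * K a := hstep0
    _ = (∫⁻ a in B, f₁ a * K a) + ∫⁻ a in Bᶜ, f₁ a * K a := (lintegral_add_compl _ hBm).symm
    _ ≤ ENNReal.ofReal (Cnear * T ^ (1-α)) + ENNReal.ofReal (Cfar * T ^ (1-α)) :=
        add_le_add hnear hfar
    _ = ENNReal.ofReal ((Cfar + Cnear) * T ^ (1-α)) := by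
        rw [← ENNReal.ofReal_add (mul_nonneg hCnear.le (Real.rpow_nonneg hT.le _))
          (mul_nonneg hCfar.le (Real.rpow_nonneg hT.le _))]
        congr 1; ring
    _ = ENNReal.ofReal ((Cfar + Cnear) * t ^ (-((1 - α) / 2))) := by
        congr 2
        rw [hTdef, ← Real.rpow_mul ht.le]
        congr 1; ring
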